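/- Fix a real t ∈ (0,1) ∪ (1,∞). Let S_N(k) denote the closed-form second-order CUE spectral form factor of Proposition 1. Then lim_{N→∞} S_N(tN)/N = min(1, t). -/

import Mathlib

open Real Filter Finset

/-- The `k`-th polygamma function: the `(k+1)`-st derivative of `log ∘ Γ`.
(Since `Real.log` of a negative number is the log of its absolute value, this
agrees with the analytic continuation of the polygamma functions.) -/
noncomputable def polygamma (k : ℕ) (x : ℝ) : ℝ :=
  iteratedDeriv (k + 1) (fun y => Real.log (Real.Gamma y)) x

/-- The digamma function `ψ₀`. -/
noncomputable def digamma (x : ℝ) : ℝ := polygamma 0 x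

/-- The trigamma function `ψ₁`. -/
noncomputable def trigamma (x : ℝ) : ℝ := polygamma 1 x


/-- The closed-form second-order CUE spectral form factor of Proposition 1. -/
noncomputable def SFF (N : ℕ) (k : ℝ) : ℝ :=
  min (N : ℝ) (|k| - Real.sin (2 * π * |k|) / (2 * π)) +
    Real.sin (π * |k|) ^ 2 / π ^ 2 *
      (digamma ((N : ℝ) + |k|) + ((N : ℝ) + |k|) * trigamma ((N : ℝ) + |k|) +
        digamma ((abs ((N : ℝ) - |k|)) + 1) + (abs ((N : ℝ) - |k|)) * trigamma ((abs ((N : ℝ) - |k|)) + 1) -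
        2 * |k| * trigamma (|k| + 1) - 2 * digamma (|k| + 1))


namespace SFFAux
open Set

/-- log ∘ Gamma -/
noncomputable def lG : ℝ → ℝ := fun y => Real.log (Real.Gamma y)

lemma digamma_eq (x : ℝ) : digamma x = deriv lG x := by
  rw [digamma, polygamma, iteratedDeriv_one]; rfl

lemma trigamma_eq (x : ℝ) : trigamma x = deriv (deriv lG) x := by
  rw [trigamma, polygamma, iteratedDeriv_succ, iteratedDeriv_one]; rfl

lemma lG_diff {x : ℝ} (hx : 0 < x) : DifferentiableAt ℝ lG x := by
  have h : ∀ m : ℕ, x ≠ -↑m := fun m => by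
    have : (0:ℝ) ≤ (m:ℝ) := Nat.cast_nonneg m
    intro hcon; rw [hcon] at hx; linarith
  exact (Real.differentiableAt_Gamma h).log (Real.Gamma_ne_zero h)

lemma lG_rec {x : ℝ} (hx : 0 < x) : lG (x + 1) = lG x + Real.log x := by
  simp only [lG, Real.Gamma_add_one hx.ne',
    Real.log_mul hx.ne' (Real.Gamma_pos_of_pos hx).ne', add_comm]

lemma lG_convex : ConvexOn ℝ (Ioi 0) lG := by
  exact Real.convexOn_log_Gamma

lemma psi_rec {x : ℝ} (hx : 0 < x) : deriv lG (x + 1) = deriv lG x + 1 / x := by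
  rw [← deriv_comp_add_const, one_div, ← Real.deriv_log,
    ← deriv_add (lG_diff hx) (Real.differentiableAt_log hx.ne')]
  apply Filter.EventuallyEq.deriv_eq
  filter_upwards [eventually_gt_nhds hx] with y hy using lG_rec hy

lemma psi_le {x : ℝ} (hx : 0 < x) : deriv lG x ≤ Real.log x := by
  have h := lG_convex.deriv_le_slope (mem_Ioi.mpr hx)
    (mem_Ioi.mpr (by linarith : (0:ℝ) < x + 1)) (by linarith) (lG_diff hx)
  rwa [slope_def_field, add_sub_cancel_left, div_one, lG_rec hx, add_sub_cancel_left] at h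

lemma le_psi {x : ℝ} (hx : 1 < x) : Real.log (x - 1) ≤ deriv lG x := by
  have hx1 : (0:ℝ) < x - 1 := by linarith
  have h := lG_convex.slope_le_deriv (mem_Ioi.mpr hx1)
    (mem_Ioi.mpr (by linarith : (0:ℝ) < x)) (by linarith) (lG_diff (by linarith))
  have hval : lG x = lG (x - 1) + Real.log (x - 1) := by
    have := lG_rec hx1; rwa [show x - 1 + 1 = x by ring] at this
  rwa [slope_def_field, hval, show x - (x - 1) = 1 by ring, add_sub_cancel_left, div_one] at h


lemma psi_sum {x : ℝ} (hx : 0 < x) (n : ℕ) :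
    deriv lG (x + n + 1) = deriv lG x + ∑ k ∈ Finset.range (n + 1), (x + k)⁻¹ := by
  induction n with
  | zero => simpa using psi_rec hx
  | succ n ih =>
      have h1 : x + (n + 1 : ℕ) + 1 = (x + n + 1) + 1 := by push_cast; ring
      rw [h1, psi_rec (by positivity), ih, Finset.sum_range_succ _ (n+1)]
      push_cast
      ring

lemma tendsto_log_sub_log (x : ℝ) (hx : 0 < x) :
    Tendsto (fun n : ℕ => Real.log n - Real.log (x + n)) atTop (nhds 0) := by
  have h1 : Tendsto (fun n : ℕ => (n : ℝ) / (x + n)) atTop (nhds 1) := by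
    have h2 : Tendsto (fun n : ℕ => x / (x + n)) atTop (nhds 0) := by
      apply Tendsto.div_atTop tendsto_const_nhds
      exact tendsto_atTop_add_const_left _ x tendsto_natCast_atTop_atTop
    have h3 : (fun n : ℕ => 1 - x / (x + n)) =ᶠ[atTop] (fun n : ℕ => (n : ℝ) / (x + n)) := by
      filter_upwards [eventually_ge_atTop 1] with n hn
      have hxn : x + (n:ℝ) ≠ 0 := by positivity
      field_simp
      ring
    refine Tendsto.congr' h3 ?_
    simpa using tendsto_const_nhds.sub h2
  have h4 : Tendsto (fun n : ℕ => Real.log ((n : ℝ) / (x + n))) atTop (nhds 0) := by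
    have := (Real.continuousAt_log one_ne_zero).tendsto.comp h1
    simpa [Function.comp_def] using this
  refine Tendsto.congr' ?_ h4
  filter_upwards [eventually_ge_atTop 1] with n hn
  rw [Real.log_div (by exact_mod_cast Nat.one_le_iff_ne_zero.mp hn) (by positivity)]

lemma tendsto_psi_seq {x : ℝ} (hx : 0 < x) :
    Tendsto (fun n : ℕ => Real.log n - ∑ k ∈ Finset.range (n + 1), (x + k)⁻¹) atTop
      (nhds (deriv lG x)) := by
  have key : Tendsto (fun n : ℕ => Real.log n - deriv lG (x + n + 1)) atTop (nhds 0) := by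
    have hlo : Tendsto (fun n : ℕ => Real.log n - Real.log (x + n + 1)) atTop (nhds 0) := by
      have := tendsto_log_sub_log (x + 1) (by linarith)
      refine this.congr fun n => by ring_nf
    have hhi : Tendsto (fun n : ℕ => Real.log n - Real.log (x + n)) atTop (nhds 0) :=
      tendsto_log_sub_log x hx
    refine tendsto_of_tendsto_of_tendsto_of_le_of_le' hlo hhi ?_ ?_
    · refine Eventually.of_forall fun n => ?_
      have h := psi_le (show (0:ℝ) < x + n + 1 by positivity)
      linarith
    · refine Eventually.of_forall fun n => ?_
      have h := le_psi (show (1:ℝ) < x + n + 1 by have := (Nat.cast_nonneg n : (0:ℝ) ≤ n); linarith)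
      have : x + (n:ℝ) + 1 - 1 = x + n := by ring
      rw [this] at h
      linarith
  have heq : (fun n : ℕ => Real.log n - ∑ k ∈ Finset.range (n + 1), (x + k)⁻¹)
      = fun n : ℕ => deriv lG x + (Real.log n - deriv lG (x + n + 1)) := by
    funext n; rw [psi_sum hx n]; ring
  rw [heq]
  simpa using tendsto_const_nhds.add key

lemma psi_concave : ConcaveOn ℝ (Ioi 0) (deriv lG) := by
  refine ⟨convex_Ioi 0, fun x hx y hy a b ha hb hab => ?_⟩
  rw [Set.mem_Ioi] at hx hy
  have hz : (0:ℝ) < a * x + b * y := by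
    rcases eq_or_lt_of_le ha with h | h
    · have hb1 : b = 1 := by linarith
      rw [← h, hb1]; simpa using hy
    · have : 0 ≤ b * y := mul_nonneg hb hy.le
      nlinarith
  have hZ := tendsto_psi_seq hz
  have hX := (tendsto_psi_seq hx).const_mul a
  have hY := (tendsto_psi_seq hy).const_mul b
  have hXY := hX.add hY
  simp only [smul_eq_mul]
  refine le_of_tendsto_of_tendsto' hXY hZ fun n => ?_
  have hsum : ∀ k ∈ Finset.range (n + 1),
      (a * x + b * y + (k:ℝ))⁻¹ ≤ a * (x + k)⁻¹ + b * (y + k)⁻¹ := by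
    intro k _
    have hco := convexOn_zpow (𝕜 := ℝ) (-1 : ℤ)
    have h := hco.2 (Set.mem_Ioi.mpr (show (0:ℝ) < x + k by positivity))
      (Set.mem_Ioi.mpr (show (0:ℝ) < y + k by positivity)) ha hb hab
    simp only [smul_eq_mul, zpow_neg, zpow_one] at h
    calc (a * x + b * y + (k:ℝ))⁻¹ = (a * (x + k) + b * (y + k))⁻¹ := by
          congr 1; have : a + b = 1 := hab; nlinarith [this]
      _ ≤ a * (x + k)⁻¹ + b * (y + k)⁻¹ := h
  have hS := Finset.sum_le_sum hsum
  rw [Finset.sum_add_distrib, ← Finset.mul_sum, ← Finset.mul_sum] at hS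
  have h1 : a + b = 1 := hab
  set L := Real.log n
  set Sx := ∑ i ∈ Finset.range (n + 1), (x + (i:ℝ))⁻¹
  set Sy := ∑ i ∈ Finset.range (n + 1), (y + (i:ℝ))⁻¹
  set Sz := ∑ i ∈ Finset.range (n + 1), (a * x + b * y + (i:ℝ))⁻¹
  have hexp : a * (L - Sx) + b * (L - Sy) = (a + b) * L - (a * Sx + b * Sy) := by ring
  rw [h1, one_mul] at hexp
  rw [hexp]
  linarith [hS]

lemma trigamma_bound {x : ℝ} (hx : 1 < x) : |deriv (deriv lG) x| ≤ (x - 1)⁻¹ := by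
  have hx1 : (0:ℝ) < x - 1 := by linarith
  by_cases hd : DifferentiableAt ℝ (deriv lG) x
  · have hub : deriv (deriv lG) x ≤ (x - 1)⁻¹ := by
      have h := psi_concave.deriv_le_slope (Set.mem_Ioi.mpr hx1)
        (Set.mem_Ioi.mpr (by linarith : (0:ℝ) < x)) (by linarith) hd
      have hval : deriv lG x = deriv lG (x - 1) + 1 / (x - 1) := by
        have := psi_rec hx1; rwa [show x - 1 + 1 = x by ring] at this
      rwa [slope_def_field, hval, show x - (x - 1) = 1 by ring, add_sub_cancel_left,
        div_one, one_div] at h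
    have hlb : 0 ≤ deriv (deriv lG) x := by
      have h := psi_concave.slope_le_deriv (Set.mem_Ioi.mpr (by linarith : (0:ℝ) < x))
        (Set.mem_Ioi.mpr (by linarith : (0:ℝ) < x + 1)) (by linarith) hd
      have : slope (deriv lG) x (x + 1) = 1 / x := by
        rw [slope_def_field, psi_rec (by linarith), add_sub_cancel_left, add_sub_cancel_left, div_one]
      rw [this] at h
      have : (0:ℝ) ≤ 1 / x := by positivity
      linarith
    rw [abs_of_nonneg hlb]; exact hub
  · rw [deriv_zero_of_not_differentiableAt hd, abs_zero]
    positivity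


lemma digamma_le {x : ℝ} (hx : 0 < x) : digamma x ≤ Real.log x := by
  rw [digamma_eq]; exact psi_le hx

lemma le_digamma {x : ℝ} (hx : 1 < x) : Real.log (x - 1) ≤ digamma x := by
  rw [digamma_eq]; exact le_psi hx

lemma abs_trigamma_le {x : ℝ} (hx : 1 < x) : |trigamma x| ≤ (x - 1)⁻¹ := by
  rw [trigamma_eq]; exact trigamma_bound hx


lemma tendsto_lin_atTop {α : ℝ} (β : ℝ) (hα : 0 < α) :
    Tendsto (fun N : ℕ => α * N + β) atTop atTop :=
  tendsto_atTop_add_const_right _ β (Tendsto.const_mul_atTop hα tendsto_natCast_atTop_atTop)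

lemma tendsto_log_lin_div {α : ℝ} (β : ℝ) (hα : 0 < α) :
    Tendsto (fun N : ℕ => Real.log (α * N + β) / N) atTop (nhds 0) := by
  have hc := tendsto_lin_atTop β hα
  have h1 : Tendsto (fun y : ℝ => Real.log y / y) atTop (nhds 0) :=
    Real.isLittleO_log_id_atTop.tendsto_div_nhds_zero
  have h2 : Tendsto (fun N : ℕ => Real.log (α * N + β) / (α * N + β)) atTop (nhds 0) :=
    h1.comp hc
  have h3 : Tendsto (fun N : ℕ => (α * N + β) / N) atTop (nhds α) := by
    have h4 : Tendsto (fun N : ℕ => α + β * (N : ℝ)⁻¹) atTop (nhds α) := by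
      simpa using tendsto_const_nhds.add
        (tendsto_inv_atTop_nhds_zero_nat.const_mul β)
    refine Tendsto.congr' ?_ h4
    filter_upwards [eventually_ge_atTop 1] with N hN
    have hN0 : (N : ℝ) ≠ 0 := by exact_mod_cast Nat.one_le_iff_ne_zero.mp hN
    field_simp
  have h5 := h2.mul h3
  rw [zero_mul] at h5
  refine Tendsto.congr' ?_ h5
  filter_upwards [hc.eventually_gt_atTop 0] with N hN
  rw [div_mul_div_comm, mul_comm (α * N + β) (N:ℝ), ← div_mul_div_comm, div_self hN.ne',
    mul_one]

lemma tendsto_digamma_div {α : ℝ} (β : ℝ) (hα : 0 < α) :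
    Tendsto (fun N : ℕ => digamma (α * N + β) / N) atTop (nhds 0) := by
  have hc := tendsto_lin_atTop β hα
  have hlo : Tendsto (fun N : ℕ => Real.log (α * N + (β - 1)) / N) atTop (nhds 0) :=
    tendsto_log_lin_div (β - 1) hα
  have hhi : Tendsto (fun N : ℕ => Real.log (α * N + β) / N) atTop (nhds 0) :=
    tendsto_log_lin_div β hα
  refine tendsto_of_tendsto_of_tendsto_of_le_of_le' hlo hhi ?_ ?_
  · filter_upwards [hc.eventually_gt_atTop 2, eventually_ge_atTop 1] with N h2 h1
    have hN : (0:ℝ) < N := by exact_mod_cast Nat.lt_of_lt_of_le Nat.zero_lt_one h1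
    have := le_digamma (show (1:ℝ) < α * N + β by linarith)
    rw [show α * (N:ℝ) + β - 1 = α * N + (β - 1) by ring] at this
    gcongr
  · filter_upwards [hc.eventually_gt_atTop 2, eventually_ge_atTop 1] with N h2 h1
    have hN : (0:ℝ) < N := by exact_mod_cast Nat.lt_of_lt_of_le Nat.zero_lt_one h1
    have := digamma_le (show (0:ℝ) < α * N + β by linarith)
    gcongr

lemma tendsto_bounded_div {u : ℕ → ℝ} {C : ℝ} (h : ∀ᶠ N : ℕ in atTop, |u N| ≤ C) :
    Tendsto (fun N : ℕ => u N / N) atTop (nhds 0) := by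
  refine squeeze_zero_norm' ?_ (tendsto_const_div_atTop_nhds_zero_nat C)
  filter_upwards [h, eventually_ge_atTop 1] with N hN h1
  have hNpos : (0:ℝ) < N := by exact_mod_cast Nat.lt_of_lt_of_le Nat.zero_lt_one h1
  rw [Real.norm_eq_abs, abs_div, abs_of_pos hNpos]
  gcongr


end SFFAux
open SFFAux in
/-- Large-`N` limit of the rescaled second-order SFF at `k = tN`. -/
theorem sff_large_N_limit (t : ℝ) (ht : 0 < t) (ht1 : t ≠ 1) :
    Filter.Tendsto (fun N : ℕ => SFF N (t * N) / N) Filter.atTop (nhds (min 1 t)) := by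
  have h1t : (0:ℝ) < 1 + t := by linarith
  have habs : (0:ℝ) < |1 - t| := abs_pos.mpr (sub_ne_zero.mpr (Ne.symm ht1))
  set Br : ℕ → ℝ := fun N =>
    digamma ((1 + t) * N) + ((1 + t) * N) * trigamma ((1 + t) * N) +
      digamma (|1 - t| * N + 1) + (|1 - t| * N) * trigamma (|1 - t| * N + 1) -
      2 * (t * N) * trigamma (t * N + 1) - 2 * digamma (t * N + 1) with hBr
  have hfun : ∀ N : ℕ, SFF N (t * N) / N =
      min (N : ℝ) (t * N - Real.sin (2 * π * (t * N)) / (2 * π)) / N +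
        Real.sin (π * (t * N)) ^ 2 / π ^ 2 * (Br N / N) := by
    intro N
    have h1 : |t * (N:ℝ)| = t * N := abs_of_nonneg (by positivity)
    have h2 : |(N:ℝ) - t * N| = |1 - t| * N := by
      rw [show ((N:ℝ) - t * N) = (1 - t) * N by ring, abs_mul, Nat.abs_cast]
    rw [SFF, h1, h2, show (N:ℝ) + t * N = (1 + t) * N by ring, hBr]
    ring
  rw [show (fun N : ℕ => SFF N (t * N) / N) = fun N : ℕ =>
      min (N : ℝ) (t * N - Real.sin (2 * π * (t * N)) / (2 * π)) / N +
        Real.sin (π * (t * N)) ^ 2 / π ^ 2 * (Br N / N) from funext hfun]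
  -- the sine/digamma/trigamma correction tends to 0
  have hsinb : ∀ N : ℕ, |Real.sin (2 * π * (t * N)) / (2 * π)| ≤ 1 := by
    intro N
    rw [abs_div, abs_of_pos Real.two_pi_pos, div_le_one Real.two_pi_pos]
    have := abs_le.mpr ⟨Real.neg_one_le_sin (2 * π * (t * N)), Real.sin_le_one (2 * π * (t * N))⟩
    linarith [Real.two_pi_pos, Real.pi_gt_three]
  have hbr : Tendsto (fun N : ℕ => Br N / N) atTop (nhds 0) := by
    have hsplit : (fun N : ℕ => Br N / N) = fun N : ℕ =>
        digamma ((1 + t) * N) / N + ((1 + t) * N) * trigamma ((1 + t) * N) / N +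
          digamma (|1 - t| * N + 1) / N + (|1 - t| * N) * trigamma (|1 - t| * N + 1) / N -
          2 * (t * N) * trigamma (t * N + 1) / N - 2 * (digamma (t * N + 1) / N) := by
      funext N; rw [hBr]; ring
    rw [hsplit]
    have hd1 : Tendsto (fun N : ℕ => digamma ((1 + t) * N) / N) atTop (nhds 0) := by
      simpa using tendsto_digamma_div 0 h1t
    have hd2 : Tendsto (fun N : ℕ => ((1 + t) * N) * trigamma ((1 + t) * N) / N) atTop
        (nhds 0) := by
      refine tendsto_bounded_div (C := 2) ?_
      filter_upwards [(tendsto_lin_atTop 0 h1t).eventually_ge_atTop 2] with N hN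
      rw [add_zero] at hN
      set y := (1 + t) * (N:ℝ) with hy
      have hy1 : (1:ℝ) < y := by linarith
      rw [abs_mul, abs_of_nonneg (by linarith : (0:ℝ) ≤ y)]
      calc y * |trigamma y| ≤ y * (y - 1)⁻¹ := by
            exact mul_le_mul_of_nonneg_left (abs_trigamma_le hy1) (by linarith)
        _ ≤ 2 := by rw [← div_eq_mul_inv, div_le_iff₀ (by linarith)]; linarith
    have hd3 : Tendsto (fun N : ℕ => digamma (|1 - t| * N + 1) / N) atTop (nhds 0) :=
      tendsto_digamma_div 1 habs
    have hd4 : Tendsto (fun N : ℕ => (|1 - t| * N) * trigamma (|1 - t| * N + 1) / N) atTop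
        (nhds 0) := by
      refine tendsto_bounded_div (C := 1) ?_
      filter_upwards [eventually_ge_atTop 1] with N hN
      have hNpos : (0:ℝ) < N := by exact_mod_cast Nat.lt_of_lt_of_le Nat.zero_lt_one hN
      set b := |1 - t| * (N:ℝ) with hb
      have hbpos : (0:ℝ) < b := by positivity
      rw [abs_mul, abs_of_nonneg hbpos.le]
      calc b * |trigamma (b + 1)| ≤ b * (b + 1 - 1)⁻¹ := by
            exact mul_le_mul_of_nonneg_left (abs_trigamma_le (by linarith)) hbpos.le
        _ = 1 := by rw [add_sub_cancel_right, mul_inv_cancel₀ hbpos.ne']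
    have hd5 : Tendsto (fun N : ℕ => 2 * (t * N) * trigamma (t * N + 1) / N) atTop
        (nhds 0) := by
      refine tendsto_bounded_div (C := 2) ?_
      filter_upwards [eventually_ge_atTop 1] with N hN
      have hNpos : (0:ℝ) < N := by exact_mod_cast Nat.lt_of_lt_of_le Nat.zero_lt_one hN
      have hk : (0:ℝ) < t * N := by positivity
      rw [abs_mul, abs_of_nonneg (by positivity : (0:ℝ) ≤ 2 * (t * N))]
      calc 2 * (t * N) * |trigamma (t * N + 1)| ≤ 2 * (t * N) * (t * N + 1 - 1)⁻¹ := by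
            exact mul_le_mul_of_nonneg_left (abs_trigamma_le (by linarith)) (by positivity)
        _ = 2 := by rw [add_sub_cancel_right, mul_assoc, mul_inv_cancel₀ hk.ne', mul_one]
    have hd6 : Tendsto (fun N : ℕ => 2 * (digamma (t * N + 1) / N)) atTop (nhds 0) := by
      simpa using (tendsto_digamma_div 1 ht).const_mul 2
    simpa using ((((hd1.add hd2).add hd3).add hd4).sub hd5).sub hd6
  have hB : Tendsto (fun N : ℕ => Real.sin (π * (t * N)) ^ 2 / π ^ 2 * (Br N / N)) atTop
      (nhds 0) := by
    refine squeeze_zero_norm' ?_ (by simpa using hbr.abs)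
    refine Eventually.of_forall fun N => ?_
    rw [Real.norm_eq_abs, abs_mul]
    have hs2 : |Real.sin (π * (t * N)) ^ 2 / π ^ 2| ≤ 1 := by
      rw [abs_div, abs_of_nonneg (by positivity : (0:ℝ) ≤ Real.sin (π * (t * N)) ^ 2),
        abs_of_nonneg (by positivity : (0:ℝ) ≤ π ^ 2), div_le_one (by positivity)]
      nlinarith [Real.sin_le_one (π * (t * N)), Real.neg_one_le_sin (π * (t * N)),
        Real.pi_gt_three]
    calc |Real.sin (π * (t * N)) ^ 2 / π ^ 2| * |Br N / N| ≤ 1 * |Br N / N| := by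
          exact mul_le_mul_of_nonneg_right hs2 (abs_nonneg _)
      _ = |Br N / N| := one_mul _
  -- the main `min` term
  have hA : Tendsto
      (fun N : ℕ => min (N : ℝ) (t * N - Real.sin (2 * π * (t * N)) / (2 * π)) / N)
      atTop (nhds (min 1 t)) := by
    rcases ht1.lt_or_gt with hlt | hgt
    · -- t < 1
      rw [min_eq_right hlt.le]
      have hev : ∀ᶠ N : ℕ in atTop,
          min (N : ℝ) (t * N - Real.sin (2 * π * (t * N)) / (2 * π)) / N =
            t - Real.sin (2 * π * (t * N)) / (2 * π) / N := by
        filter_upwards [(tendsto_lin_atTop 0 (by linarith : (0:ℝ) < 1 - t)).eventually_ge_atTop 1,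
          eventually_ge_atTop 1] with N hN h1
        rw [add_zero] at hN
        have hN0 : ((N:ℝ)) ≠ 0 := by
          have : (0:ℝ) < N := by exact_mod_cast Nat.lt_of_lt_of_le Nat.zero_lt_one h1
          exact this.ne'
        have hs := abs_le.mp (hsinb N)
        rw [min_eq_right (by nlinarith [hs.1, hs.2] : t * N - Real.sin (2 * π * (t * N)) / (2 * π) ≤ (N:ℝ)),
          sub_div, mul_div_assoc, div_self hN0, mul_one]
      refine Tendsto.congr' (hev.mono fun N h => h.symm) ?_
      have := tendsto_const_nhds (x := t) (f := atTop (α := ℕ)) |>.sub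
        (tendsto_bounded_div (Eventually.of_forall hsinb))
      simpa using this
    · -- 1 < t
      rw [min_eq_left hgt.le]
      have hev : ∀ᶠ N : ℕ in atTop,
          min (N : ℝ) (t * N - Real.sin (2 * π * (t * N)) / (2 * π)) / N = 1 := by
        filter_upwards [(tendsto_lin_atTop 0 (by linarith : (0:ℝ) < t - 1)).eventually_ge_atTop 1,
          eventually_ge_atTop 1] with N hN h1
        rw [add_zero] at hN
        have hN0 : ((N:ℝ)) ≠ 0 := by
          have : (0:ℝ) < N := by exact_mod_cast Nat.lt_of_lt_of_le Nat.zero_lt_one h1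
          exact this.ne'
        have hs := abs_le.mp (hsinb N)
        rw [min_eq_left (by nlinarith [hs.1, hs.2] : (N:ℝ) ≤ t * N - Real.sin (2 * π * (t * N)) / (2 * π)),
          div_self hN0]
      exact Tendsto.congr' (hev.mono fun N h => h.symm) tendsto_const_nhds
  simpa using hA.add hB
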